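/- Let N ≥ 1, R = ℤ[X]/(X^N + 1), and let τ : R → R be the ring homomorphism determined by τ(X) = −X^{N−1} (i.e., X ↦ X^{−1}). For m ∈ R let Toep(m) ∈ M_N(ℤ) be the matrix, in the power basis 1, X, …, X^{N−1}, of the ℤ-linear map x ↦ m·x on R. Then for all m, m' ∈ R: Toep(m·τ(m')) = Toep(m)·Toep(m')^T. -/

import Mathlib

open Polynomial Finset Matrix

/-- `Rq N` is the ring `ℤ[X]/(X^N + 1)`. -/
abbrev Rq (N : ℕ) : Type := AdjoinRoot ((X : ℤ[X]) ^ N + 1)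

/-- The image of the indeterminate `X` in `ℤ[X]/(X^N + 1)`. -/
noncomputable def rx (N : ℕ) : Rq N := AdjoinRoot.root _

/-- `X^N + 1` is monic when `N ≥ 1`. -/
theorem monic_XN_add_one (N : ℕ) (hN : 0 < N) : ((X : ℤ[X]) ^ N + 1).Monic := by
  simpa using Polynomial.monic_X_pow_add_C (1 : ℤ) hN.ne'

/-- `Toep m` is the matrix, in the power basis `1, X, …, X^(N-1)` of
`ℤ[X]/(X^N+1)`, of the `ℤ`-linear multiplication-by-`m` map `x ↦ m·x`. -/
noncomputable def Toep (N : ℕ) (hN : 0 < N) (m : Rq N) :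
    Matrix (Fin ((X : ℤ[X]) ^ N + 1).natDegree)
      (Fin ((X : ℤ[X]) ^ N + 1).natDegree) ℤ :=
  LinearMap.toMatrix (AdjoinRoot.powerBasis' (monic_XN_add_one N hN)).basis
    (AdjoinRoot.powerBasis' (monic_XN_add_one N hN)).basis
    (LinearMap.mulLeft ℤ m)

theorem natDegree_XN (N : ℕ) (hN : 0 < N) : ((X : ℤ[X]) ^ N + 1).natDegree = N := by
  have := Polynomial.natDegree_X_pow_add_C (R := ℤ) (n := N) (r := 1)
  simpa using this

theorem Toep_mul (N : ℕ) (hN : 0 < N) (a b : Rq N) :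
    Toep N hN (a * b) = Toep N hN a * Toep N hN b := by
  unfold Toep
  rw [LinearMap.mulLeft_mul,
    LinearMap.toMatrix_comp _ (AdjoinRoot.powerBasis' (monic_XN_add_one N hN)).basis]
  rfl

theorem Toep_apply (N : ℕ) (hN : 0 < N) (q : ℤ[X])
    (i j : Fin ((X : ℤ[X]) ^ N + 1).natDegree) :
    Toep N hN (AdjoinRoot.mk _ q) i j
      = ((q * X ^ (j : ℕ)) %ₘ ((X : ℤ[X]) ^ N + 1)).coeff i := by
  unfold Toep
  erw [LinearMap.toMatrix_apply, LinearMap.mulLeft_apply]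
  have hrepr : ∀ (f : Rq N) (k : Fin (AdjoinRoot.powerBasis' (monic_XN_add_one N hN)).dim),
      (AdjoinRoot.powerBasis' (monic_XN_add_one N hN)).basis.repr f k
        = (AdjoinRoot.modByMonicHom (monic_XN_add_one N hN) f).coeff ↑k := fun _ _ => rfl
  erw [hrepr]
  have hb : (AdjoinRoot.powerBasis' (monic_XN_add_one N hN)).basis j
      = AdjoinRoot.mk _ ((X : ℤ[X]) ^ (j : ℕ)) := by
    have := (AdjoinRoot.powerBasis' (monic_XN_add_one N hN)).basis_eq_pow j
    rw [this, show (AdjoinRoot.powerBasis' (monic_XN_add_one N hN)).gen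
      = AdjoinRoot.root ((X : ℤ[X]) ^ N + 1) from rfl, map_pow, AdjoinRoot.mk_X]
  erw [hb, ← _root_.map_mul, AdjoinRoot.modByMonicHom_mk]

/-- `X^k mod (X^N+1) = X^k` for `k < N`. -/
theorem modXN_small (N : ℕ) (hN : 0 < N) (k : ℕ) (hk : k < N) :
    ((X : ℤ[X]) ^ k) %ₘ ((X : ℤ[X]) ^ N + 1) = X ^ k := by
  rw [Polynomial.modByMonic_eq_self_iff (monic_XN_add_one N hN)]
  calc ((X : ℤ[X]) ^ k).degree ≤ k := Polynomial.degree_X_pow_le k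
    _ < N := by exact_mod_cast hk
    _ = ((X : ℤ[X]) ^ N + 1).degree := by
      rw [Polynomial.degree_eq_natDegree (monic_XN_add_one N hN).ne_zero, natDegree_XN N hN]

/-- `X^k mod (X^N+1) = -X^(k-N)` for `N ≤ k < 2N`. -/
theorem modXN_big (N : ℕ) (hN : 0 < N) (k : ℕ) (hk1 : N ≤ k) (hk2 : k < 2 * N) :
    ((X : ℤ[X]) ^ k) %ₘ ((X : ℤ[X]) ^ N + 1) = -X ^ (k - N) := by
  have hsub : (X : ℤ[X]) ^ k - ((X : ℤ[X]) ^ N + 1) * X ^ (k - N) = -X ^ (k - N) := by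
    have : (X : ℤ[X]) ^ N * X ^ (k - N) = X ^ k := by
      rw [← pow_add]; congr 1; omega
    rw [add_mul, one_mul, this]; ring
  have h0 : (((X : ℤ[X]) ^ N + 1) * X ^ (k - N)) %ₘ ((X : ℤ[X]) ^ N + 1) = 0 :=
    Polynomial.self_mul_modByMonic (monic_XN_add_one N hN)
  have := Polynomial.sub_modByMonic ((X : ℤ[X]) ^ k) (((X : ℤ[X]) ^ N + 1) * X ^ (k - N))
    ((X : ℤ[X]) ^ N + 1)
  rw [hsub, h0, sub_zero] at this
  rw [← this, Polynomial.neg_modByMonic, modXN_small N hN (k - N) (by omega)]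

theorem Toep_tau_X (N : ℕ) (hN : 0 < N) :
    Toep N hN (-(rx N ^ (N - 1))) = (Toep N hN (rx N))ᵀ := by
  have hx : rx N = AdjoinRoot.mk _ (X : ℤ[X]) := (AdjoinRoot.mk_X).symm
  have hx' : -(rx N ^ (N - 1)) = AdjoinRoot.mk _ (-(X : ℤ[X]) ^ (N - 1)) := by
    rw [hx, map_neg, map_pow]
  ext i j
  rw [transpose_apply, hx', hx, Toep_apply, Toep_apply]
  have hi : (i : ℕ) < N := by simpa [natDegree_XN N hN] using i.isLt
  have hj : (j : ℕ) < N := by simpa [natDegree_XN N hN] using j.isLt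
  have hXmul : (X : ℤ[X]) * X ^ (i : ℕ) = X ^ ((i : ℕ) + 1) := by
    rw [← pow_succ']
  have hmul : (-(X : ℤ[X]) ^ (N - 1)) * X ^ (j : ℕ) = -X ^ (N - 1 + (j : ℕ)) := by
    rw [neg_mul, ← pow_add]
  rw [hXmul, hmul, Polynomial.neg_modByMonic, Polynomial.coeff_neg]
  by_cases hjz : (j : ℕ) = 0
  · -- LHS: -(X^(N-1) mod).coeff i ; RHS: (X^(i+1) mod).coeff j
    rw [hjz, add_zero, modXN_small N hN (N - 1) (by omega)]
    by_cases hiN : (i : ℕ) + 1 = N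
    · rw [show (i : ℕ) + 1 = N from hiN, modXN_big N hN N le_rfl (by omega), Nat.sub_self,
        pow_zero, Polynomial.coeff_neg, Polynomial.coeff_X_pow, Polynomial.coeff_one]
      simp only [hjz]
      rw [if_pos (by omega : (i : ℕ) = N - 1)]
      norm_num
    · rw [modXN_small N hN ((i : ℕ) + 1) (by omega), Polynomial.coeff_X_pow,
        Polynomial.coeff_X_pow]
      rw [if_neg (by omega), if_neg (by omega)]
      simp
  · -- j ≥ 1: LHS: -((X^(N-1+j) mod).coeff i) = (X^(j-1)).coeff i
    rw [modXN_big N hN (N - 1 + (j : ℕ)) (by omega) (by omega)]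
    have : N - 1 + (j : ℕ) - N = (j : ℕ) - 1 := by omega
    rw [this, Polynomial.coeff_neg, neg_neg, Polynomial.coeff_X_pow]
    by_cases hiN : (i : ℕ) + 1 = N
    · rw [show (i : ℕ) + 1 = N from hiN, modXN_big N hN N le_rfl (by omega), Nat.sub_self,
        pow_zero, Polynomial.coeff_neg, Polynomial.coeff_one]
      rw [if_neg (by omega)]
      simp [hjz]
    · rw [modXN_small N hN ((i : ℕ) + 1) (by omega), Polynomial.coeff_X_pow]
      by_cases h : (i : ℕ) = (j : ℕ) - 1
      · rw [if_pos h, if_pos (by omega)]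
      · rw [if_neg h, if_neg (by omega)]

theorem Toep_intCast (N : ℕ) (hN : 0 < N) (a : ℤ) :
    Toep N hN ((a : ℤ) : Rq N) = a • (1 : Matrix (Fin ((X : ℤ[X]) ^ N + 1).natDegree)
      (Fin ((X : ℤ[X]) ^ N + 1).natDegree) ℤ) := by
  unfold Toep
  have : LinearMap.mulLeft ℤ ((a : Rq N)) = a • LinearMap.id := by
    ext x
    simp [zsmul_eq_mul]
  rw [this, _root_.map_smul, LinearMap.toMatrix_id]
  rfl

theorem Toep_add (N : ℕ) (hN : 0 < N) (a b : Rq N) :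
    Toep N hN (a + b) = Toep N hN a + Toep N hN b := by
  unfold Toep
  have : LinearMap.mulLeft ℤ (a + b) = LinearMap.mulLeft ℤ a + LinearMap.mulLeft ℤ b := by
    ext x; simp [add_mul]
  rw [this, map_add]
  rfl

theorem Toep_tau (N : ℕ) (hN : 0 < N)
    (τ : Rq N →+* Rq N) (hτ : τ (rx N) = -(rx N ^ (N - 1)))
    (m' : Rq N) : Toep N hN (τ m') = (Toep N hN m')ᵀ := by
  obtain ⟨q, rfl⟩ := AdjoinRoot.mk_surjective m'
  induction q using Polynomial.induction_on with
  | C a =>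
    have : AdjoinRoot.mk ((X : ℤ[X]) ^ N + 1) (C a) = ((a : ℤ) : Rq N) := by
      rw [show (C a : ℤ[X]) = ((a : ℤ) : ℤ[X]) from (Polynomial.C_eq_intCast a), map_intCast]
    rw [this, map_intCast, Toep_intCast, transpose_smul, transpose_one]
  | add p q hp hq =>
    rw [map_add, map_add, Toep_add, Toep_add, transpose_add, hp, hq]
  | monomial n a hp =>
    have hsplit : AdjoinRoot.mk ((X : ℤ[X]) ^ N + 1) (C a * X ^ (n + 1))
        = AdjoinRoot.mk _ (C a * X ^ n) * rx N := by
      rw [show rx N = AdjoinRoot.root ((X : ℤ[X]) ^ N + 1) from rfl, ← AdjoinRoot.mk_X,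
        ← _root_.map_mul]
      congr 1
      ring
    rw [hsplit, _root_.map_mul, Toep_mul, hτ, Toep_tau_X, hp, ← transpose_mul, ← Toep_mul,
      mul_comm]

theorem stmt9 (N : ℕ) (hN : 0 < N)
    (τ : Rq N →+* Rq N) (hτ : τ (rx N) = -(rx N ^ (N - 1)))
    (m m' : Rq N) :
    Toep N hN (m * τ m') = Toep N hN m * (Toep N hN m')ᵀ := by
  rw [Toep_mul, Toep_tau N hN τ hτ]
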